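/- Let N_n ∈ ℝ^{(5n+3)×8n} be the stoichiometric matrix of the reduced weakly irreversible n-site phosphorylation network, and define E_n ∈ ℝ^{8n×3n} to be the block-diagonal matrix with n diagonal blocks each equal to E₁ ∈ ℝ^{8×3}, where E₁ has columns (1,1,1,0,1,1,1,0)ᵀ, (0,0,1,1,0,0,0,0)ᵀ, (0,0,0,0,0,0,1,1)ᵀ. Then the 3n columns of E_n form a basis of ker(N_n) and are a choice of extreme vectors of the flux cone ker(N_n) ∩ ℝ^{8n}_{≥0}: each column has a support coordinate not shared by any other column, hence every support-minimal element of the cone is a positive multiple of a column of E_n. -/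

import Mathlib

open Matrix

namespace Weakly

variable (K : Type*) [CommRing K]

/-- `P₁` block (with `5n+3` rows, as used in forming `N_{n+1}`): nonzero rows are
row 1 = (−1,0,1,−1,0,0,0,0), row 2 = (0,0,0,0,−1,0,1,−1) and the last row
= (−1,0,0,0,0,0,1,−1). -/
def P1 (n : ℕ) : Matrix (Fin (5 * n + 3)) (Fin 8) K := fun i j =>
  if (i : ℕ) = 0 then ![(-1 : K), 0, 1, -1, 0, 0, 0, 0] j
  else if (i : ℕ) = 1 then ![(0 : K), 0, 0, 0, -1, 0, 1, -1] j
  else if (i : ℕ) = 5 * n + 2 then ![(-1 : K), 0, 0, 0, 0, 0, 1, -1] j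
  else 0

def P2 : Matrix (Fin 5) (Fin 8) K :=
  !![1, -1, 0, 0, 0, 0, 0, 0;
     0, 1, -1, 1, 0, 0, 0, 0;
     0, 0, 0, 0, 1, -1, 0, 0;
     0, 0, 0, 0, 0, 1, -1, 1;
     0, 0, 1, -1, -1, 0, 0, 0]

/-- Stoichiometric matrices of the reduced weakly irreversible `n`-site
phosphorylation networks: `N_{n+1} = [[N_n, P₁],[0, P₂]]` (and `N_0` is the
empty 3×0 matrix, so that `N_1 = [P₁; P₂]`). -/
def Nmat : (n : ℕ) → Matrix (Fin (5 * n + 3)) (Fin (8 * n)) K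
  | 0 => 0
  | n + 1 =>
      Matrix.reindex (finSumFinEquiv.trans (finCongr (by omega)))
        (finSumFinEquiv.trans (finCongr (by omega)))
        (Matrix.fromBlocks (Nmat n) (P1 K n) 0 (P2 K))

/-- `Q₁` block of the reactant matrix. -/
def Q1 (n : ℕ) : Matrix (Fin (5 * n + 3)) (Fin 8) K := fun i j =>
  if (i : ℕ) = 0 then ![(1 : K), 0, 0, 1, 0, 0, 0, 0] j
  else if (i : ℕ) = 1 then ![(0 : K), 0, 0, 0, 1, 0, 0, 1] j
  else if (i : ℕ) = 5 * n + 2 then ![(1 : K), 0, 0, 0, 0, 0, 0, 1] j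
  else 0

def Q2 : Matrix (Fin 5) (Fin 8) K :=
  !![0, 1, 0, 0, 0, 0, 0, 0;
     0, 0, 1, 0, 0, 0, 0, 0;
     0, 0, 0, 0, 0, 1, 0, 0;
     0, 0, 0, 0, 0, 0, 1, 0;
     0, 0, 0, 1, 1, 0, 0, 0]

/-- Reactant matrices: `A_{n+1} = [[A_n, Q₁],[0, Q₂]]`. -/
def Amat : (n : ℕ) → Matrix (Fin (5 * n + 3)) (Fin (8 * n)) K
  | 0 => 0
  | n + 1 =>
      Matrix.reindex (finSumFinEquiv.trans (finCongr (by omega)))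
        (finSumFinEquiv.trans (finCongr (by omega)))
        (Matrix.fromBlocks (Amat n) (Q1 K n) 0 (Q2 K))

/-- Conservation law matrix `W_n = [Id₃, W̄, …, W̄]` with
`W̄ = [[1,1,0,0,0],[0,0,1,1,0],[1,1,1,1,1]]`. -/
def Wmat (n : ℕ) : Matrix (Fin 3) (Fin (5 * n + 3)) K := fun i j =>
  if (j : ℕ) < 3 then (if (i : ℕ) = (j : ℕ) then 1 else 0)
  else if (i : ℕ) = 2 then 1
  else if (i : ℕ) = 0 then (if ((j : ℕ) - 3) % 5 < 2 then 1 else 0)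
  else (if ((j : ℕ) - 3) % 5 = 2 ∨ ((j : ℕ) - 3) % 5 = 3 then 1 else 0)

/-- The entries of the block `E₁ ∈ ℝ^{8×3}` with columns `(1,1,1,0,1,1,1,0)ᵀ`,
`(0,0,1,1,0,0,0,0)ᵀ` and `(0,0,0,0,0,0,1,1)ᵀ`. -/
def E1entry (ir kr : ℕ) : K :=
  if kr = 0 then (if ir = 3 ∨ ir = 7 then 0 else 1)
  else if kr = 1 then (if ir = 2 ∨ ir = 3 then 1 else 0)
  else (if ir = 6 ∨ ir = 7 then 1 else 0)

/-- Extreme matrix `E_n`: block diagonal with `n` copies of `E₁`. -/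
def Emat (n : ℕ) : Matrix (Fin (8 * n)) (Fin (3 * n)) K := fun i k =>
  if (i : ℕ) / 8 = (k : ℕ) / 3 then E1entry K ((i : ℕ) % 8) ((k : ℕ) % 3) else 0

/-- Columns of `E_n`. -/
def Ecol (n : ℕ) : Fin (3 * n) → Fin (8 * n) → K := fun k i => Emat K n i k

/-- `N'_n`: the stoichiometric matrix with its first three rows removed. -/
def Nmat' (n : ℕ) : Matrix (Fin (5 * n)) (Fin (8 * n)) K :=
  (Nmat K n).submatrix (fun i => (⟨(i : ℕ) + 3, by have := i.isLt; omega⟩ : Fin (5 * n + 3))) id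

/-- `A'_n`: the reactant matrix with its first three rows removed. -/
def Amat' (n : ℕ) : Matrix (Fin (5 * n)) (Fin (8 * n)) K :=
  (Amat K n).submatrix (fun i => (⟨(i : ℕ) + 3, by have := i.isLt; omega⟩ : Fin (5 * n + 3))) id

/-- The square matrix `N'_n · diag(E_n λ) · A'ᵀ_n`. -/
def Csq (n : ℕ) (lam : Fin (3 * n) → K) : Matrix (Fin (5 * n)) (Fin (5 * n)) K :=
  Nmat' K n * Matrix.diagonal ((Emat K n).mulVec lam) * (Amat' K n)ᵀ

/-- The matrix `N'_n · diag(E_n λ) · Aᵀ_n`. -/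
def Galemat (n : ℕ) (lam : Fin (3 * n) → K) : Matrix (Fin (5 * n)) (Fin (5 * n + 3)) K :=
  Nmat' K n * Matrix.diagonal ((Emat K n).mulVec lam) * (Amat K n)ᵀ

end Weakly

open Weakly

open Weakly

namespace S17
open Matrix

lemma blt {c n : ℕ} (b : Fin n) (r : Fin c) : c * (b : ℕ) + (r : ℕ) < c * n := by
  have h1 := b.isLt; have h2 := r.isLt
  calc c * (b : ℕ) + (r : ℕ) < c * ((b : ℕ) + 1) := by rw [Nat.mul_succ]; omega
    _ ≤ c * n := Nat.mul_le_mul_left c h1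

lemma sum_blocks {M : Type*} [AddCommMonoid M] {c n : ℕ} (f : Fin (c * n) → M) :
    ∑ j, f j = ∑ b : Fin n, ∑ r : Fin c, f ⟨c * (b : ℕ) + (r : ℕ), blt b r⟩ := by
  calc ∑ j, f j
      = ∑ p : Fin n × Fin c, f (((finProdFinEquiv).trans (finCongr (Nat.mul_comm n c))) p) :=
        (Equiv.sum_comp _ f).symm
    _ = ∑ b : Fin n, ∑ r : Fin c,
          f (((finProdFinEquiv).trans (finCongr (Nat.mul_comm n c))) (b, r)) :=
        Fintype.sum_prod_type _
    _ = _ := by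
        refine Finset.sum_congr rfl fun b _ => Finset.sum_congr rfl fun r _ => ?_
        apply congrArg f; apply Fin.ext
        simp [Nat.add_comm]

end S17
namespace S17
@[simp] lemma fs_2_3 : Fin.succ (2 : Fin 3) = (3 : Fin 4) := rfl
@[simp] lemma fs_2_4 : Fin.succ (2 : Fin 4) = (3 : Fin 5) := rfl
@[simp] lemma fs_3_4 : Fin.succ (3 : Fin 4) = (4 : Fin 5) := rfl
@[simp] lemma fs_2_5 : Fin.succ (2 : Fin 5) = (3 : Fin 6) := rfl
@[simp] lemma fs_3_5 : Fin.succ (3 : Fin 5) = (4 : Fin 6) := rfl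
@[simp] lemma fs_4_5 : Fin.succ (4 : Fin 5) = (5 : Fin 6) := rfl
@[simp] lemma fs_2_6 : Fin.succ (2 : Fin 6) = (3 : Fin 7) := rfl
@[simp] lemma fs_3_6 : Fin.succ (3 : Fin 6) = (4 : Fin 7) := rfl
@[simp] lemma fs_4_6 : Fin.succ (4 : Fin 6) = (5 : Fin 7) := rfl
@[simp] lemma fs_5_6 : Fin.succ (5 : Fin 6) = (6 : Fin 7) := rfl
@[simp] lemma fs_2_7 : Fin.succ (2 : Fin 7) = (3 : Fin 8) := rfl
@[simp] lemma fs_3_7 : Fin.succ (3 : Fin 7) = (4 : Fin 8) := rfl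
@[simp] lemma fs_4_7 : Fin.succ (4 : Fin 7) = (5 : Fin 8) := rfl
@[simp] lemma fs_5_7 : Fin.succ (5 : Fin 7) = (6 : Fin 8) := rfl
@[simp] lemma fs_6_7 : Fin.succ (6 : Fin 7) = (7 : Fin 8) := rfl
end S17
namespace S17
open Matrix Weakly

/-- The solved form of the kernel relations within one block of 8 coordinates. -/
def Brel (w0 w1 w2 w3 w4 w5 w6 w7 : ℝ) : Prop :=
  w1 = w0 ∧ w4 = w0 ∧ w5 = w0 ∧ w2 = w0 + w3 ∧ w6 = w0 + w7

/-- Per-block solved form for a vector of length `8n`. -/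
def SF (n : ℕ) (w : Fin (8 * n) → ℝ) : Prop :=
  ∀ b, ∀ _ : b < n, Brel (w ⟨8 * b, by omega⟩) (w ⟨8 * b + 1, by omega⟩)
    (w ⟨8 * b + 2, by omega⟩) (w ⟨8 * b + 3, by omega⟩) (w ⟨8 * b + 4, by omega⟩)
    (w ⟨8 * b + 5, by omega⟩) (w ⟨8 * b + 6, by omega⟩) (w ⟨8 * b + 7, by omega⟩)

lemma p2_ker_iff (u : Fin 8 → ℝ) :
    (P2 ℝ).mulVec u = 0 ↔ Brel (u 0) (u 1) (u 2) (u 3) (u 4) (u 5) (u 6) (u 7) := by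
  constructor
  · intro h
    have h0 := congrFun h 0; have h1 := congrFun h 1; have h2 := congrFun h 2
    have h3 := congrFun h 3; have h4 := congrFun h 4
    simp [P2, mulVec, dotProduct, Fin.sum_univ_succ] at h0 h1 h2 h3 h4
    exact ⟨by linarith, by linarith, by linarith, by linarith, by linarith⟩
  · rintro ⟨e1, e2, e3, e4, e5⟩
    funext i
    fin_cases i <;> simp [P2, mulVec, dotProduct, Fin.sum_univ_succ] <;> linarith

lemma p1_mulVec (n : ℕ) (u : Fin 8 → ℝ)
    (hu : Brel (u 0) (u 1) (u 2) (u 3) (u 4) (u 5) (u 6) (u 7)) :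
    (P1 ℝ n).mulVec u = 0 := by
  obtain ⟨e1, e2, e3, e4, e5⟩ := hu
  funext i
  rcases eq_or_ne (i : ℕ) 0 with h0 | h0
  · simp [P1, mulVec, dotProduct, h0, Fin.sum_univ_succ]; linarith
  rcases eq_or_ne (i : ℕ) 1 with h1 | h1
  · simp [P1, mulVec, dotProduct, h0, h1, Fin.sum_univ_succ]; linarith
  rcases eq_or_ne (i : ℕ) (5 * n + 2) with h2 | h2
  · simp [P1, mulVec, dotProduct, h0, h1, h2, Fin.sum_univ_succ]; linarith
  · simp [P1, mulVec, dotProduct, h0, h1, h2]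

end S17
namespace S17
open Matrix Weakly

lemma emat_apply (n : ℕ) (i : Fin (8 * n)) (k : Fin (3 * n)) :
    Emat ℝ n i k = if (i : ℕ) / 8 = (k : ℕ) / 3 then E1entry ℝ ((i : ℕ) % 8) ((k : ℕ) % 3)
      else 0 := rfl

lemma emat_mulVec (n : ℕ) (lam : Fin (3 * n) → ℝ) (b r : ℕ) (hb : b < n) (hr : r < 8) :
    (Emat ℝ n).mulVec lam ⟨8 * b + r, by omega⟩ =
      E1entry ℝ r 0 * lam ⟨3 * b, by omega⟩ + E1entry ℝ r 1 * lam ⟨3 * b + 1, by omega⟩ +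
        E1entry ℝ r 2 * lam ⟨3 * b + 2, by omega⟩ := by
  show ∑ k, Emat ℝ n ⟨8 * b + r, by omega⟩ k * lam k = _
  rw [sum_blocks (c := 3) (n := n) (fun k => Emat ℝ n ⟨8 * b + r, by omega⟩ k * lam k)]
  rw [Finset.sum_eq_single_of_mem (⟨b, hb⟩ : Fin n) (Finset.mem_univ _)]
  · rw [Fin.sum_univ_three]
    have h0 : Emat ℝ n ⟨8 * b + r, by omega⟩ ⟨3 * b + 0, by omega⟩ = E1entry ℝ r 0 := by
      rw [emat_apply, if_pos (by simp; omega)]; congr 1 <;> simp <;> omega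
    have h1 : Emat ℝ n ⟨8 * b + r, by omega⟩ ⟨3 * b + 1, by omega⟩ = E1entry ℝ r 1 := by
      rw [emat_apply, if_pos (by simp; omega)]; congr 1 <;> simp <;> omega
    have h2 : Emat ℝ n ⟨8 * b + r, by omega⟩ ⟨3 * b + 2, by omega⟩ = E1entry ℝ r 2 := by
      rw [emat_apply, if_pos (by simp; omega)]; congr 1 <;> simp <;> omega
    simp only [show ((0 : Fin 3) : ℕ) = 0 from rfl, show ((1 : Fin 3) : ℕ) = 1 from rfl,
      show ((2 : Fin 3) : ℕ) = 2 from rfl]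
    rw [h0, h1, h2]
    congr 2 <;> apply congrArg <;> exact Fin.ext (by omega)
  · intro b' _ hb'
    apply Finset.sum_eq_zero
    intro s _
    have hb'' : (b' : ℕ) ≠ b := fun h => hb' (Fin.ext h)
    rw [emat_apply, if_neg (by simp only [Fin.val_mk]; omega), zero_mul]

end S17
namespace S17
open Matrix Weakly

/-- Private support index of column `k`. -/
def pI {n : ℕ} (k : Fin (3 * n)) : Fin (8 * n) :=
  ⟨8 * ((k : ℕ) / 3) + (if (k : ℕ) % 3 = 0 then 0 else if (k : ℕ) % 3 = 1 then 3 else 7),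
    by have := k.isLt; split_ifs <;> omega⟩

lemma sf_emat (n : ℕ) (lam : Fin (3 * n) → ℝ) : SF n ((Emat ℝ n).mulVec lam) := by
  intro b hb
  have e0 := emat_mulVec n lam b 0 hb (by norm_num)
  have e1 := emat_mulVec n lam b 1 hb (by norm_num)
  have e2 := emat_mulVec n lam b 2 hb (by norm_num)
  have e3 := emat_mulVec n lam b 3 hb (by norm_num)
  have e4 := emat_mulVec n lam b 4 hb (by norm_num)
  have e5 := emat_mulVec n lam b 5 hb (by norm_num)
  have e6 := emat_mulVec n lam b 6 hb (by norm_num)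
  have e7 := emat_mulVec n lam b 7 hb (by norm_num)
  simp only [Nat.add_zero] at e0
  norm_num [E1entry] at e0 e1 e2 e3 e4 e5 e6 e7
  exact ⟨by rw [e1, e0], by rw [e4, e0], by rw [e5, e0], by rw [e2, e0, e3],
    by rw [e6, e0, e7]⟩

set_option maxHeartbeats 2000000 in
lemma emat_of_sf (n : ℕ) (w : Fin (8 * n) → ℝ) (hw : SF n w) :
    w = (Emat ℝ n).mulVec (fun k => w (pI k)) := by
  have key : ∀ (b r : ℕ) (hb : b < n) (hr : r < 8),
      w ⟨8 * b + r, by omega⟩ = (Emat ℝ n).mulVec (fun k => w (pI k)) ⟨8 * b + r, by omega⟩ := by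
    intro b r hb hr
    rw [emat_mulVec n _ b r hb hr]
    have p0 : pI (⟨3 * b, by omega⟩ : Fin (3 * n)) = ⟨8 * b, by omega⟩ := by
      apply Fin.ext; simp only [pI]
      have h : (3 * b) % 3 = 0 := by omega
      rw [if_pos h]; omega
    have p1 : pI (⟨3 * b + 1, by omega⟩ : Fin (3 * n)) = ⟨8 * b + 3, by omega⟩ := by
      apply Fin.ext; simp only [pI]
      have h : (3 * b + 1) % 3 = 1 := by omega
      rw [if_neg (by omega), if_pos h]; omega
    have p2 : pI (⟨3 * b + 2, by omega⟩ : Fin (3 * n)) = ⟨8 * b + 7, by omega⟩ := by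
      apply Fin.ext; simp only [pI]
      rw [if_neg (by omega), if_neg (by omega)]; omega
    rw [p0, p1, p2]
    obtain ⟨B1, B2, B3, B4, B5⟩ := hw b hb
    interval_cases r <;> norm_num [E1entry] <;> linarith
  funext i
  have hin := i.isLt
  have h2 := key ((i : ℕ) / 8) ((i : ℕ) % 8) (by omega) (by omega)
  have hi : (⟨8 * ((i : ℕ) / 8) + (i : ℕ) % 8, by omega⟩ : Fin (8 * n)) = i :=
    Fin.ext ((by omega : 8 * ((i : ℕ) / 8) + (i : ℕ) % 8 = (i : ℕ)))
  rwa [hi] at h2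

end S17
namespace S17
open Matrix Weakly

lemma sum_elim_eq_zero {α β γ : Type*} [Zero γ] {f : α → γ} {g : β → γ} :
    Sum.elim f g = 0 ↔ f = 0 ∧ g = 0 := by
  constructor
  · intro h
    exact ⟨funext fun i => congrFun h (Sum.inl i), funext fun i => congrFun h (Sum.inr i)⟩
  · rintro ⟨h1, h2⟩
    funext x
    cases x with
    | inl i => exact congrFun h1 i
    | inr i => exact congrFun h2 i

lemma comp_equiv_eq_zero_iff {α β γ : Type*} [Zero γ] (f : β → γ) (e : α ≃ β) :
    f ∘ e = 0 ↔ f = 0 := by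
  constructor
  · intro h
    funext b
    have := congrFun h (e.symm b)
    simpa using this
  · intro h; rw [h]; rfl

lemma nmat_ker_iff (n : ℕ) (w : Fin (8 * n) → ℝ) :
    (Nmat ℝ n).mulVec w = 0 ↔ SF n w := by
  induction n with
  | zero =>
      constructor
      · intro _ b hb; exact absurd hb (by omega)
      · intro _
        show (0 : Matrix (Fin 3) (Fin 0) ℝ).mulVec w = 0
        simp
  | succ n ih =>
      rw [show Nmat ℝ (n + 1) = Matrix.reindex (finSumFinEquiv.trans (finCongr (by omega)))
          (finSumFinEquiv.trans (finCongr (by omega)))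
          (Matrix.fromBlocks (Nmat ℝ n) (P1 ℝ n) 0 (P2 ℝ)) from rfl]
      rw [Matrix.reindex_apply, Matrix.submatrix_mulVec_equiv, Equiv.symm_symm]
      rw [comp_equiv_eq_zero_iff, Matrix.fromBlocks_mulVec, sum_elim_eq_zero,
        Matrix.zero_mulVec, zero_add]
      constructor
      · rintro ⟨h1, h2⟩
        have hb2 := (p2_ker_iff _).mp h2
        rw [p1_mulVec n _ hb2, add_zero] at h1
        have hsf1 := (ih _).mp h1
        intro b hb
        rcases Nat.lt_or_ge b n with hlt | hge
        · exact hsf1 b hlt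
        · obtain rfl : b = n := by omega
          exact hb2
      · intro hsf
        have hb2 : (P2 ℝ).mulVec ((w ∘ (finSumFinEquiv.trans (finCongr (by omega : 8 * n + 8 = 8 * (n + 1))))) ∘ Sum.inr) = 0 :=
          (p2_ker_iff _).mpr (hsf n (by omega))
        refine ⟨?_, hb2⟩
        rw [p1_mulVec n _ ((p2_ker_iff _).mp hb2), add_zero]
        exact (ih _).mpr (fun b hb => hsf b (by omega))

end S17
namespace S17
open Matrix Weakly

lemma ecol_pI (n : ℕ) (k k' : Fin (3 * n)) :
    Ecol ℝ n k' (pI k) = if k' = k then 1 else 0 := by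
  have hk := k.isLt; have hk' := k'.isLt
  have hval : ((pI k : ℕ)) = 8 * ((k : ℕ) / 3) +
      (if (k : ℕ) % 3 = 0 then 0 else if (k : ℕ) % 3 = 1 then 3 else 7) := rfl
  have hq : (k : ℕ) % 3 = 0 ∨ (k : ℕ) % 3 = 1 ∨ (k : ℕ) % 3 = 2 := by omega
  have hq' : (k' : ℕ) % 3 = 0 ∨ (k' : ℕ) % 3 = 1 ∨ (k' : ℕ) % 3 = 2 := by omega
  have hp8 : (pI k : ℕ) % 8 =
      (if (k : ℕ) % 3 = 0 then 0 else if (k : ℕ) % 3 = 1 then 3 else 7) := by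
    rw [hval]; split_ifs <;> omega
  show Emat ℝ n (pI k) k' = _
  rw [emat_apply]
  by_cases hbc : (k' : ℕ) / 3 = (k : ℕ) / 3
  · rw [if_pos (by rw [hval]; split_ifs <;> omega)]
    by_cases hk'k : k' = k
    · subst hk'k
      rw [if_pos rfl, hp8]
      rcases hq with h | h | h <;> rw [h] <;> norm_num [E1entry]
    · rw [if_neg hk'k, hp8]
      have hne : (k' : ℕ) % 3 ≠ (k : ℕ) % 3 := by
        intro h; exact hk'k (Fin.ext (by omega))
      rcases hq with h | h | h <;> rcases hq' with h' | h' | h' <;>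
        first
          | (exfalso; omega)
          | (rw [h, h']; norm_num [E1entry])
  · rw [if_neg (by rw [hval]; split_ifs <;> omega),
      if_neg (fun h => hbc (by rw [h]))]

lemma emat_nonneg (n : ℕ) (i : Fin (8 * n)) (k : Fin (3 * n)) : (0 : ℝ) ≤ Emat ℝ n i k := by
  rw [emat_apply]
  split_ifs
  · unfold E1entry; split_ifs <;> norm_num
  · exact le_refl 0

lemma mulVec_pI (n : ℕ) (g : Fin (3 * n) → ℝ) (k : Fin (3 * n)) :
    (Emat ℝ n).mulVec g (pI k) = g k := by
  show ∑ k', Emat ℝ n (pI k) k' * g k' = g k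
  rw [Finset.sum_eq_single_of_mem k (Finset.mem_univ _)]
  · rw [show Emat ℝ n (pI k) k = 1 from by rw [show Emat ℝ n (pI k) k = Ecol ℝ n k (pI k) from rfl, ecol_pI, if_pos rfl], one_mul]
  · intro k' _ hk'
    rw [show Emat ℝ n (pI k) k' = Ecol ℝ n k' (pI k) from rfl, ecol_pI, if_neg hk', zero_mul]

lemma ecol_eq (n : ℕ) (k : Fin (3 * n)) :
    Ecol ℝ n k = (Emat ℝ n).mulVec (Pi.single k 1) := by
  funext i
  simp [Ecol, Matrix.mulVec_single]

lemma sum_smul_ecol (n : ℕ) (g : Fin (3 * n) → ℝ) :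
    (∑ k, g k • Ecol ℝ n k) = (Emat ℝ n).mulVec g := by
  funext i
  rw [Finset.sum_apply]
  show ∑ k, (g k • Ecol ℝ n k) i = ∑ k, Emat ℝ n i k * g k
  exact Finset.sum_congr rfl fun k _ => by simp [Ecol, mul_comm]

end S17

open S17 in
/-- the `3n` columns of `E_n` (block diagonal with blocks `E₁`)
form a basis of `ker N_n`; each column has a support coordinate not shared by
any other column; and they are a choice of extreme vectors of the flux cone
`ker N_n ∩ ℝ^{8n}_{≥0}`: every support-minimal nonzero element of the cone is a
positive multiple of a column of `E_n`. -/
theorem stmt17 (n : ℕ) (hn : 1 ≤ n) :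
    LinearIndependent ℝ (Ecol ℝ n) ∧
    (∀ w : Fin (8 * n) → ℝ,
        (Nmat ℝ n).mulVec w = 0 ↔ w ∈ Submodule.span ℝ (Set.range (Ecol ℝ n))) ∧
    (∀ k : Fin (3 * n), ∃ i : Fin (8 * n),
        Ecol ℝ n k i ≠ 0 ∧ ∀ k' : Fin (3 * n), k' ≠ k → Ecol ℝ n k' i = 0) ∧
    (∀ k : Fin (3 * n),
        (Nmat ℝ n).mulVec (Ecol ℝ n k) = 0 ∧ (∀ i, 0 ≤ Ecol ℝ n k i)) ∧
    (∀ w : Fin (8 * n) → ℝ, w ≠ 0 → (Nmat ℝ n).mulVec w = 0 → (∀ i, 0 ≤ w i) →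
        (∀ v : Fin (8 * n) → ℝ, v ≠ 0 → (Nmat ℝ n).mulVec v = 0 → (∀ i, 0 ≤ v i) →
            {i | v i ≠ 0} ⊆ {i | w i ≠ 0} → {i | v i ≠ 0} = {i | w i ≠ 0}) →
        ∃ (k : Fin (3 * n)) (c : ℝ), 0 < c ∧ w = c • Ecol ℝ n k) := by
  have span_iff : ∀ w : Fin (8 * n) → ℝ,
      w ∈ Submodule.span ℝ (Set.range (Ecol ℝ n)) ↔ ∃ lam, (Emat ℝ n).mulVec lam = w := by
    intro w
    have hr : Set.range (Ecol ℝ n) = Set.range (Emat ℝ n).col := rfl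
    rw [hr, ← Matrix.range_mulVecLin, LinearMap.mem_range]
    constructor <;> rintro ⟨lam, h⟩ <;> exact ⟨lam, h⟩
  have hcols : ∀ k : Fin (3 * n), (Nmat ℝ n).mulVec (Ecol ℝ n k) = 0 := by
    intro k
    rw [ecol_eq]
    exact (nmat_ker_iff n _).mpr (sf_emat n _)
  refine ⟨?_, ?_, ?_, ?_, ?_⟩
  · -- linear independence
    rw [Fintype.linearIndependent_iff]
    intro g hg k
    have h0 : (Emat ℝ n).mulVec g = 0 := by rw [← sum_smul_ecol n g]; exact hg
    have := congrFun h0 (pI k)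
    rwa [mulVec_pI] at this
  · -- kernel = span
    intro w
    rw [nmat_ker_iff n w]
    constructor
    · intro h
      exact (span_iff w).mpr ⟨_, (emat_of_sf n w h).symm⟩
    · intro h
      obtain ⟨lam, hl⟩ := (span_iff w).mp h
      rw [← hl]
      exact sf_emat n lam
  · -- private support coordinates
    intro k
    refine ⟨pI k, ?_, fun k' hk' => by rw [ecol_pI, if_neg hk']⟩
    rw [ecol_pI, if_pos rfl]
    norm_num
  · -- columns lie in the flux cone
    exact fun k => ⟨hcols k, fun i => emat_nonneg n i k⟩
  · -- extreme vectors
    intro w hw0 hker hpos hmin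
    have hsf := (nmat_ker_iff n w).mp hker
    have hw : w = (Emat ℝ n).mulVec (fun k => w (pI k)) := emat_of_sf n w hsf
    set lam : Fin (3 * n) → ℝ := fun k => w (pI k) with hlam
    have hlampos : ∀ k, 0 ≤ lam k := fun k => hpos (pI k)
    have hex : ∃ k, lam k ≠ 0 := by
      by_contra h
      push_neg at h
      exact hw0 (by rw [hw, (funext h : lam = 0), Matrix.mulVec_zero])
    obtain ⟨k, hk⟩ := hex
    have hkpos : 0 < lam k := lt_of_le_of_ne (hlampos k) (Ne.symm hk)
    have hlow : ∀ i, Emat ℝ n i k * lam k ≤ w i := by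
      intro i
      conv_rhs => rw [hw]
      show _ ≤ ∑ k', Emat ℝ n i k' * lam k'
      exact Finset.single_le_sum (f := fun k' => Emat ℝ n i k' * lam k')
        (fun k' _ => mul_nonneg (emat_nonneg n i k') (hlampos k')) (Finset.mem_univ k)
    have hvne : Ecol ℝ n k ≠ 0 := by
      intro h
      have := congrFun h (pI k)
      rw [ecol_pI, if_pos rfl] at this
      norm_num at this
    have hsub : {i | Ecol ℝ n k i ≠ 0} ⊆ {i | w i ≠ 0} := by
      intro i hi
      have h1 : 0 < Emat ℝ n i k := lt_of_le_of_ne (emat_nonneg n i k) (Ne.symm hi)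
      exact ne_of_gt (lt_of_lt_of_le (mul_pos h1 hkpos) (hlow i))
    have heq := hmin (Ecol ℝ n k) hvne (hcols k) (fun i => emat_nonneg n i k) hsub
    have hz : ∀ k', k' ≠ k → lam k' = 0 := by
      intro k' hk'
      by_contra h
      have hmem : pI k' ∈ {i | w i ≠ 0} := h
      rw [← heq] at hmem
      exact hmem (by rw [ecol_pI, if_neg (Ne.symm hk')])
    refine ⟨k, lam k, hkpos, ?_⟩
    funext i
    have hwi : w i = ∑ k', Emat ℝ n i k' * lam k' := congrFun hw i
    rw [hwi]
    show ∑ k', Emat ℝ n i k' * lam k' = lam k * Ecol ℝ n k i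
    rw [Finset.sum_eq_single_of_mem k (Finset.mem_univ k)]
    · show Emat ℝ n i k * lam k = lam k * Emat ℝ n i k
      ring
    · intro k' _ hk'
      rw [hz k' hk', mul_zero]
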